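/- arXiv:1201.2207 — 4 statements merged into one kernel-verified Lean document; each statement's English description precedes it below -/
import Mathlib

section
/- Let m and h be positive integers, let P : Fin h × Fin m → ℝ be decision probabilities satisfying P(i,j) > 0 for all i,j and ∑_{i=1}^{h} P(i,j) = 1 for every j, let G : ℝ^m → ℝ be a convex function, let G' : ℝ^m → ℝ^m be a subgradient selection for G (i.e., G(y) ≥ G(x) + ⟨G'(x), y - x⟩ for all x, y ∈ ℝ^m), and let φ : ℝ^m → ℝ^{h×m} satisfy ∑_{i=1}^{h} φ(r)_{i,j} = G'(r)_j for every r and every j. Define the payment function Ψ(r, i, j) = G(r) - ⟨G'(r), r⟩ + φ(r)_{i,j} / P(i,j). Then Ψ is proper: for all probability vectors b, r in the simplex Δ_m, EU(b, b) ≥ EU(b, r), where EU(b, r) = ∑_{i=1}^{h} ∑_{j=1}^{m} P(i,j) · b_j · Ψ(r, i, j). -/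
/-- A payment function of the form
`Ψ(r, i, j) = G(r) - ⟨G'(r), r⟩ + φ(r)_{i,j} / P(i,j)`, with `G` convex,
`G'` a subgradient selection for `G`, and `φ` summing over decisions to `G'`,
is proper: truthful reporting maximizes expected utility. -/
theorem payment_function_proper
    (m h : ℕ) (hm : 0 < m) (hh : 0 < h)
    (P : Fin h × Fin m → ℝ)
    (hPpos : ∀ i j, 0 < P (i, j))
    (hPsum : ∀ j : Fin m, ∑ i : Fin h, P (i, j) = 1)
    (G : (Fin m → ℝ) → ℝ)
    (hGconv : ConvexOn ℝ Set.univ G)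
    (G' : (Fin m → ℝ) → (Fin m → ℝ))
    (hG'sub : ∀ x y : Fin m → ℝ, G x + ∑ j, G' x j * (y j - x j) ≤ G y)
    (φ : (Fin m → ℝ) → Fin h → Fin m → ℝ)
    (hφ : ∀ (r : Fin m → ℝ) (j : Fin m), ∑ i : Fin h, φ r i j = G' r j)
    (Ψ : (Fin m → ℝ) → Fin h → Fin m → ℝ)
    (hΨ : ∀ (r : Fin m → ℝ) (i : Fin h) (j : Fin m),
      Ψ r i j = G r - (∑ k, G' r k * r k) + φ r i j / P (i, j))
    (b r : Fin m → ℝ)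
    (hb_nonneg : ∀ j, 0 ≤ b j) (hb_sum : ∑ j, b j = 1)
    (hr_nonneg : ∀ j, 0 ≤ r j) (hr_sum : ∑ j, r j = 1) :
    ∑ i : Fin h, ∑ j : Fin m, P (i, j) * b j * Ψ r i j ≤
      ∑ i : Fin h, ∑ j : Fin m, P (i, j) * b j * Ψ b i j := by
  have key : ∀ s : Fin m → ℝ,
      ∑ i : Fin h, ∑ j : Fin m, P (i, j) * b j * Ψ s i j
        = (G s - ∑ k, G' s k * s k) + ∑ j, b j * G' s j := by
    intro s
    rw [Finset.sum_comm]
    have hj : ∀ j : Fin m, ∑ i : Fin h, P (i, j) * b j * Ψ s i j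
        = b j * (G s - ∑ k, G' s k * s k) + b j * G' s j := by
      intro j
      have : ∀ i : Fin h, P (i, j) * b j * Ψ s i j
          = P (i, j) * (b j * (G s - ∑ k, G' s k * s k)) + b j * φ s i j := by
        intro i
        rw [hΨ]
        field_simp [(hPpos i j).ne']
      rw [Finset.sum_congr rfl fun i _ => this i, Finset.sum_add_distrib,
        ← Finset.sum_mul, hPsum, ← Finset.mul_sum, hφ]
      ring
    rw [Finset.sum_congr rfl fun j _ => hj j, Finset.sum_add_distrib,
      ← Finset.sum_mul, hb_sum]
    ring
  rw [key r, key b]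
  have hb' : (G b - ∑ k, G' b k * b k) + ∑ j, b j * G' b j = G b := by
    have : ∑ j, b j * G' b j = ∑ k, G' b k * b k :=
      Finset.sum_congr rfl fun j _ => mul_comm _ _
    rw [this]; ring
  rw [hb']
  have := hG'sub r b
  calc (G r - ∑ k, G' r k * r k) + ∑ j, b j * G' r j
      = G r + ∑ j, G' r j * (b j - r j) := by
        rw [Finset.sum_congr rfl (fun j _ => mul_sub (G' r j) (b j) (r j)),
          Finset.sum_sub_distrib]
        have : ∑ j, b j * G' r j = ∑ j, G' r j * b j :=
          Finset.sum_congr rfl fun j _ => mul_comm _ _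
        rw [this]; ring
    _ ≤ G b := hG'sub r b
end

section
/- Let m and h be positive integers, let P : Fin h × Fin m → ℝ satisfy P(i,j) > 0 for all i,j and ∑_{i=1}^{h} P(i,j) = 1 for every j, let G : ℝ^m → ℝ be strictly convex, let G' : ℝ^m → ℝ^m be a subgradient selection for G, and let φ : ℝ^m → ℝ^{h×m} satisfy ∑_{i=1}^{h} φ(r)_{i,j} = G'(r)_j for every r and j. Define Ψ(r, i, j) = G(r) - ⟨G'(r), r⟩ + φ(r)_{i,j} / P(i,j). Then Ψ is strictly proper: for all probability vectors b, r ∈ Δ_m with r ≠ b, EU(b, b) > EU(b, r), where EU(b, r) = ∑_{i=1}^{h} ∑_{j=1}^{m} P(i,j) · b_j · Ψ(r, i, j). -/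
/-- With `G` strictly convex and `G'` a strict subgradient selection,
the payment function `Ψ(r, i, j) = G(r) - ⟨G'(r), r⟩ + φ(r)_{i,j} / P(i,j)` is
strictly proper: any non-truthful report yields strictly lower expected utility. -/
theorem payment_function_strictly_proper
    (m h : ℕ) (hm : 0 < m) (hh : 0 < h)
    (P : Fin h × Fin m → ℝ)
    (hPpos : ∀ i j, 0 < P (i, j))
    (hPsum : ∀ j : Fin m, ∑ i : Fin h, P (i, j) = 1)
    (G : (Fin m → ℝ) → ℝ)
    (hGconv : StrictConvexOn ℝ Set.univ G)
    (G' : (Fin m → ℝ) → (Fin m → ℝ))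
    (hG'sub : ∀ x y : Fin m → ℝ, y ≠ x →
      G x + ∑ j, G' x j * (y j - x j) < G y)
    (φ : (Fin m → ℝ) → Fin h → Fin m → ℝ)
    (hφ : ∀ (r : Fin m → ℝ) (j : Fin m), ∑ i : Fin h, φ r i j = G' r j)
    (Ψ : (Fin m → ℝ) → Fin h → Fin m → ℝ)
    (hΨ : ∀ (r : Fin m → ℝ) (i : Fin h) (j : Fin m),
      Ψ r i j = G r - (∑ k, G' r k * r k) + φ r i j / P (i, j))
    (b r : Fin m → ℝ)
    (hb_nonneg : ∀ j, 0 ≤ b j) (hb_sum : ∑ j, b j = 1)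
    (hr_nonneg : ∀ j, 0 ≤ r j) (hr_sum : ∑ j, r j = 1)
    (hne : r ≠ b) :
    ∑ i : Fin h, ∑ j : Fin m, P (i, j) * b j * Ψ r i j <
      ∑ i : Fin h, ∑ j : Fin m, P (i, j) * b j * Ψ b i j := by
  have key : ∀ x : Fin m → ℝ,
      ∑ i : Fin h, ∑ j : Fin m, P (i, j) * b j * Ψ x i j
        = G x + ∑ j, G' x j * (b j - x j) := by
    intro x
    have step : ∀ i j, P (i, j) * b j * Ψ x i j
        = P (i, j) * b j * (G x - (∑ k, G' x k * x k)) + b j * φ x i j := by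
      intro i j
      have hP := (hPpos i j).ne'
      rw [hΨ]
      field_simp
    calc ∑ i : Fin h, ∑ j : Fin m, P (i, j) * b j * Ψ x i j
        = ∑ j : Fin m, ((∑ i : Fin h, P (i, j)) * (b j * (G x - (∑ k, G' x k * x k)))
            + b j * (∑ i : Fin h, φ x i j)) := by
          simp_rw [step]
          rw [Finset.sum_comm]
          refine Finset.sum_congr rfl fun j _ => ?_
          rw [Finset.sum_add_distrib, ← Finset.mul_sum, Finset.sum_mul]
          refine congrArg₂ (· + ·) (Finset.sum_congr rfl fun i _ => by ring) rfl
      _ = G x + ∑ j, G' x j * (b j - x j) := by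
          simp_rw [hPsum, hφ, one_mul]
          rw [Finset.sum_add_distrib, ← Finset.sum_mul, hb_sum, one_mul]
          have h2 : ∑ j, G' x j * (b j - x j)
              = ∑ j, b j * G' x j - ∑ k, G' x k * x k := by
            rw [← Finset.sum_sub_distrib]
            exact Finset.sum_congr rfl fun j _ => by ring
          rw [h2]; ring
  rw [key r, key b]
  simp only [sub_self, mul_zero, Finset.sum_const_zero, add_zero]
  exact hG'sub r b (Ne.symm hne)
end

section
/- Let m and h be positive integers, let P : Fin h × Fin m → ℝ satisfy P(i,j) > 0 for all i,j and ∑_{i=1}^{h} P(i,j) = 1 for every j, let G : ℝ^m → ℝ be any function, let G' : ℝ^m → ℝ^m be any map, and let φ : ℝ^m → ℝ^{h×m} satisfy ∑_{i=1}^{h} φ(r)_{i,j} = G'(r)_j for every r and j. Define Ψ(r, i, j) = G(r) - ⟨G'(r), r⟩ + φ(r)_{i,j} / P(i,j). Then for all probability vectors b, r ∈ Δ_m, the expected utility of reporting r under true belief b satisfies EU(b, r) = ∑_{i=1}^{h} ∑_{j=1}^{m} P(i,j) · b_j · Ψ(r, i, j) = G(r) + ⟨G'(r), b - r⟩. -/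
/-- For the payment function
`Ψ(r, i, j) = G(r) - ⟨G'(r), r⟩ + φ(r)_{i,j} / P(i,j)`, the expected utility of
reporting `r` under true belief `b` equals `G(r) + ⟨G'(r), b - r⟩`. -/
theorem expected_utility_eq_G_plus_subgradient_term
    (m h : ℕ) (hm : 0 < m) (hh : 0 < h)
    (P : Fin h × Fin m → ℝ)
    (hPpos : ∀ i j, 0 < P (i, j))
    (hPsum : ∀ j : Fin m, ∑ i : Fin h, P (i, j) = 1)
    (G : (Fin m → ℝ) → ℝ)
    (G' : (Fin m → ℝ) → (Fin m → ℝ))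
    (φ : (Fin m → ℝ) → Fin h → Fin m → ℝ)
    (hφ : ∀ (r : Fin m → ℝ) (j : Fin m), ∑ i : Fin h, φ r i j = G' r j)
    (Ψ : (Fin m → ℝ) → Fin h → Fin m → ℝ)
    (hΨ : ∀ (r : Fin m → ℝ) (i : Fin h) (j : Fin m),
      Ψ r i j = G r - (∑ k, G' r k * r k) + φ r i j / P (i, j))
    (b r : Fin m → ℝ)
    (hb_nonneg : ∀ j, 0 ≤ b j) (hb_sum : ∑ j, b j = 1)
    (hr_nonneg : ∀ j, 0 ≤ r j) (hr_sum : ∑ j, r j = 1) :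
    ∑ i : Fin h, ∑ j : Fin m, P (i, j) * b j * Ψ r i j =
      G r + ∑ j, G' r j * (b j - r j) := by
  have key : ∀ i j, P (i, j) * b j * Ψ r i j
      = P (i, j) * b j * (G r - (∑ k, G' r k * r k)) + b j * φ r i j := by
    intro i j
    rw [hΨ]
    field_simp [(hPpos i j).ne']
  simp only [key, Finset.sum_add_distrib]
  rw [Finset.sum_comm]
  have h1 : ∑ j : Fin m, ∑ i : Fin h, P (i, j) * b j * (G r - (∑ k, G' r k * r k))
      = G r - (∑ k, G' r k * r k) := by
    have : ∀ j : Fin m, ∑ i : Fin h, P (i, j) * b j * (G r - (∑ k, G' r k * r k))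
        = b j * (G r - (∑ k, G' r k * r k)) := by
      intro j
      rw [← Finset.sum_mul, ← Finset.sum_mul, hPsum, one_mul]
    simp only [this, ← Finset.sum_mul, hb_sum, one_mul]
  have h2 : ∑ i : Fin h, ∑ j : Fin m, b j * φ r i j = ∑ j, b j * G' r j := by
    rw [Finset.sum_comm]
    refine Finset.sum_congr rfl fun j _ => ?_
    rw [← Finset.mul_sum, hφ]
  rw [h1, h2]
  have : ∑ j, G' r j * (b j - r j) = (∑ j, b j * G' r j) - ∑ k, G' r k * r k := by
    rw [← Finset.sum_sub_distrib]
    exact Finset.sum_congr rfl fun j _ => by ring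
  rw [this]; ring
end

section
/- Let m be a positive integer, let n be a positive integer (the number of reporting agents), let r^1, ..., r^n ∈ ℝ^m be probability vectors with all components strictly positive (the agents' reports), let w_1, ..., w_n ≥ 0 be expert-assigned weights, let ρ_1, ..., ρ_n ∈ ℝ be the agents' cumulative instantaneous rewards, and let ϖ > 0. Define the components of the weighted average payment by Ψ^{ave}_j = ∑_{a=1}^{n} w_a · ρ_a + ϖ · ∑_{a=1}^{n} w_a · log(r^a_j) for each j, and define the aggregated belief by B_j = exp((Ψ^{ave}_j - ∑_{a=1}^{n} w_a · ρ_a)/ϖ) / ∑_{k=1}^{m} exp((Ψ^{ave}_k - ∑_{a=1}^{n} w_a · ρ_a)/ϖ). Then the aggregated belief equals the normalized weighted geometric mean of the agents' reports: B_j = (∏_{a=1}^{n} (r^a_j)^{w_a}) / (∑_{k=1}^{m} ∏_{a=1}^{n} (r^a_k)^{w_a}) for every j, and in particular B is a probability vector with all components strictly positive. -/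
open Real

/-- The aggregated belief obtained as the generalized inverse
(softmax) of the weighted average payment function equals the normalized
weighted geometric mean of the agents' reports, and is a strictly positive
probability vector. -/
theorem aggregated_belief_eq_weighted_geometric_mean
    (m n : ℕ) (hm : 0 < m) (hn : 0 < n)
    (r : Fin n → Fin m → ℝ)
    (hr_pos : ∀ (a : Fin n) (j : Fin m), 0 < r a j)
    (hr_sum : ∀ a : Fin n, ∑ j : Fin m, r a j = 1)
    (w : Fin n → ℝ) (hw : ∀ a, 0 ≤ w a)
    (ρ : Fin n → ℝ)
    (ϖ : ℝ) (hϖ : 0 < ϖ)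
    (Ψave : Fin m → ℝ)
    (hΨave : ∀ j : Fin m,
      Ψave j = (∑ a : Fin n, w a * ρ a) + ϖ * ∑ a : Fin n, w a * Real.log (r a j))
    (B : Fin m → ℝ)
    (hB : ∀ j : Fin m,
      B j = Real.exp ((Ψave j - ∑ a : Fin n, w a * ρ a) / ϖ) /
        ∑ k : Fin m, Real.exp ((Ψave k - ∑ a : Fin n, w a * ρ a) / ϖ)) :
    (∀ j : Fin m,
      B j = (∏ a : Fin n, (r a j) ^ (w a)) /
        ∑ k : Fin m, ∏ a : Fin n, (r a k) ^ (w a)) ∧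
    (∀ j : Fin m, 0 < B j) ∧ (∑ j : Fin m, B j = 1) := by
  have key : ∀ j : Fin m,
      Real.exp ((Ψave j - ∑ a : Fin n, w a * ρ a) / ϖ)
        = ∏ a : Fin n, (r a j) ^ (w a) := by
    intro j
    have h1 : (Ψave j - ∑ a : Fin n, w a * ρ a) / ϖ
        = ∑ a : Fin n, w a * Real.log (r a j) := by
      rw [hΨave j]; field_simp; ring
    rw [h1, Real.exp_sum]
    refine Finset.prod_congr rfl fun a _ => ?_
    rw [mul_comm, Real.exp_mul, Real.exp_log (hr_pos a j)]
  have hBj : ∀ j : Fin m, B j = (∏ a : Fin n, (r a j) ^ (w a)) /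
      ∑ k : Fin m, ∏ a : Fin n, (r a k) ^ (w a) := by
    intro j
    rw [hB j, key j]
    congr 1
    exact Finset.sum_congr rfl fun k _ => key k
  have hprod_pos : ∀ j : Fin m, 0 < ∏ a : Fin n, (r a j) ^ (w a) :=
    fun j => Finset.prod_pos fun a _ => Real.rpow_pos_of_pos (hr_pos a j) _
  have hsum_pos : 0 < ∑ k : Fin m, ∏ a : Fin n, (r a k) ^ (w a) :=
    Finset.sum_pos (fun k _ => hprod_pos k) (Finset.univ_nonempty_iff.mpr ⟨⟨0, hm⟩⟩)
  refine ⟨hBj, fun j => ?_, ?_⟩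
  · rw [hBj j]; exact div_pos (hprod_pos j) hsum_pos
  · rw [Finset.sum_congr rfl fun j _ => hBj j, ← Finset.sum_div,
      div_self hsum_pos.ne']
end
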